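/- With γ₁, γ₂ > 1 fixed and γ = γ₁γ₂(1 + β₁β₂ cos φ) varying with the angle φ between the boost velocities, the Thomas angle cos θ (given by (1+γ+γ₁+γ₂)²/((1+γ)(1+γ₁)(1+γ₂)) - 1) is minimized (i.e. θ maximal) when γ = γ₁ + γ₂ - 1, and then cos θ_max = 1 - 2(γ₁-1)(γ₂-1)/((γ₁+1)(γ₂+1)). -/

import Mathlib

/-- The Thomas angle is maximal (cos θ minimal) at γ = γ₁ + γ₂ - 1, with
cos θ_max = 1 - 2(γ₁-1)(γ₂-1)/((γ₁+1)(γ₂+1)). -/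
theorem thomas_angle_max (γ₁ γ₂ : ℝ) (h₁ : 1 < γ₁) (h₂ : 1 < γ₂) :
    γ₁ + γ₂ - 1 ∈
        Set.Icc (γ₁ * γ₂ - Real.sqrt ((γ₁ ^ 2 - 1) * (γ₂ ^ 2 - 1)))
          (γ₁ * γ₂ + Real.sqrt ((γ₁ ^ 2 - 1) * (γ₂ ^ 2 - 1))) ∧
      (∀ γ ∈
          Set.Icc (γ₁ * γ₂ - Real.sqrt ((γ₁ ^ 2 - 1) * (γ₂ ^ 2 - 1)))
            (γ₁ * γ₂ + Real.sqrt ((γ₁ ^ 2 - 1) * (γ₂ ^ 2 - 1))),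
        (1 + (γ₁ + γ₂ - 1) + γ₁ + γ₂) ^ 2 /
              ((1 + (γ₁ + γ₂ - 1)) * (1 + γ₁) * (1 + γ₂)) - 1 ≤
          (1 + γ + γ₁ + γ₂) ^ 2 / ((1 + γ) * (1 + γ₁) * (1 + γ₂)) - 1) ∧
      (1 + (γ₁ + γ₂ - 1) + γ₁ + γ₂) ^ 2 /
          ((1 + (γ₁ + γ₂ - 1)) * (1 + γ₁) * (1 + γ₂)) - 1 =
        1 - 2 * (γ₁ - 1) * (γ₂ - 1) / ((γ₁ + 1) * (γ₂ + 1)) := by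
  set s := Real.sqrt ((γ₁ ^ 2 - 1) * (γ₂ ^ 2 - 1)) with hs
  have hnn : (0:ℝ) ≤ (γ₁ ^ 2 - 1) * (γ₂ ^ 2 - 1) :=
    mul_nonneg (by nlinarith) (by nlinarith)
  have hs2 : s ^ 2 = (γ₁ ^ 2 - 1) * (γ₂ ^ 2 - 1) := Real.sq_sqrt hnn
  have hsnn : 0 ≤ s := Real.sqrt_nonneg _
  have hsge : (γ₁ - 1) * (γ₂ - 1) ≤ s := by
    have h := Real.sqrt_le_sqrt (show ((γ₁ - 1) * (γ₂ - 1)) ^ 2 ≤ (γ₁ ^ 2 - 1) * (γ₂ ^ 2 - 1) by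
      nlinarith [mul_pos (mul_pos (sub_pos.2 h₁) (sub_pos.2 h₂)) (show (0:ℝ) < γ₁ + γ₂ by linarith)])
    rwa [Real.sqrt_sq (by nlinarith)] at h
  have hsle : s ≤ γ₁ * γ₂ := by
    have h := Real.sqrt_le_sqrt (show (γ₁ ^ 2 - 1) * (γ₂ ^ 2 - 1) ≤ (γ₁ * γ₂) ^ 2 by nlinarith)
    rwa [Real.sqrt_sq (by nlinarith)] at h
  have hK : (0:ℝ) < (1 + γ₁) * (1 + γ₂) := by nlinarith
  refine ⟨⟨by nlinarith, by nlinarith⟩, ?_, ?_⟩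
  · intro γ hγ
    obtain ⟨hγl, hγr⟩ := hγ
    have ht : (0:ℝ) < 1 + γ := by nlinarith
    have hc : (0:ℝ) < γ₁ + γ₂ := by nlinarith
    have hD1 : (0:ℝ) < (1 + (γ₁ + γ₂ - 1)) * (1 + γ₁) * (1 + γ₂) := by nlinarith
    have hD2 : (0:ℝ) < (1 + γ) * (1 + γ₁) * (1 + γ₂) := by nlinarith
    rw [sub_le_sub_iff_right, div_le_div_iff₀ hD1 hD2]
    nlinarith [mul_nonneg (mul_nonneg hK.le hc.le) (sq_nonneg (1 + γ - (γ₁ + γ₂)))]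
  · have h3 : (γ₁ + γ₂ : ℝ) ≠ 0 := by positivity
    have h4 : (1 + γ₁ : ℝ) ≠ 0 := by positivity
    have h5 : (1 + γ₂ : ℝ) ≠ 0 := by positivity
    have h6 : (γ₁ + 1 : ℝ) ≠ 0 := by positivity
    have h7 : (γ₂ + 1 : ℝ) ≠ 0 := by positivity
    have h8 : (1 + (γ₁ + γ₂ - 1) : ℝ) ≠ 0 := ne_of_gt (by linarith)
    field_simp
    ring
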